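/- The quotient of a synchronous algebra by a congruence is again a synchronous algebra, and the canonical quotient map x ↦ [x] is a surjective morphism of synchronous algebras. -/

import Mathlib

/-- Letter-types: `l` for a pair of proper letters, `p` for (letter, padding),
`q` for (padding, letter). -/
inductive LTy | l | p | q
deriving DecidableEq

/-- The five types of (well-formed) synchronous words:
`ll`, `ll→lb` (= `lllb`), `lb`, `ll→bl` (= `llbl`), `bl`. -/
inductive STy | ll | lllb | lb | llbl | bl
deriving DecidableEq

namespace STy

/-- Letter-type of the first letter. -/
def src : STy → LTy
  | ll => .l | lllb => .l | lb => .p | llbl => .l | bl => .q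

/-- Letter-type of the last letter. -/
def tgt : STy → LTy
  | ll => .l | lllb => .p | lb => .p | llbl => .q | bl => .q

/-- `σ = α→β` is compatible with `τ = β'→γ` iff `β = β'` or `β = ll`. -/
def compat (σ τ : STy) : Prop := σ.tgt = τ.src ∨ σ.tgt = LTy.l

/-- Product of compatible types (junk on incompatible pairs). -/
def comp : STy → STy → STy
  | ll, ll => ll
  | ll, lllb => lllb
  | ll, lb => lllb
  | ll, llbl => llbl
  | ll, bl => llbl
  | lllb, _ => lllb
  | lb, _ => lb
  | llbl, _ => llbl
  | bl, _ => bl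

end STy

/-- A synchronous algebra: a `STy`-typed set with a dependency relation and a
partial associative product defined exactly on compatible pairs, monotone with
respect to dependency, with units.  The partial product is modelled as an
`Option`-valued total product. -/
structure SyncAlg where
  A : Type
  ty : A → STy
  dep : A → A → Prop
  mul : A → A → Option A
  dep_refl : ∀ x, dep x x
  dep_symm : ∀ {x y}, dep x y → dep y x
  dep_eq : ∀ {x y}, dep x y → ty x = ty y → x = y
  mul_defined : ∀ x y, (mul x y).isSome ↔ (ty x).compat (ty y)
  ty_mul : ∀ {x y z}, mul x y = some z → ty z = (ty x).comp (ty y)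
  mul_assoc : ∀ x y z,
    (mul x y).bind (fun a => mul a z) = (mul y z).bind (fun b => mul x b)
  dep_mul_left : ∀ {x x' y z z'}, dep x x' →
    mul x y = some z → mul x' y = some z' → dep z z'
  dep_mul_right : ∀ {x x' y z z'}, dep x x' →
    mul y x = some z → mul y x' = some z' → dep z z'
  unit : STy → A
  ty_unit : ∀ τ, ty (unit τ) = τ
  unit_mul : ∀ {τ x z}, mul (unit τ) x = some z → dep z x
  mul_unit : ∀ {τ x z}, mul x (unit τ) = some z → dep z x
  unit_lllb : mul (unit .ll) (unit .lb) = some (unit .lllb)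
  unit_llbl : mul (unit .ll) (unit .bl) = some (unit .llbl)

namespace SyncAlg

/-- A closed subset of a synchronous algebra: saturated under dependency. -/
def Closed (S : SyncAlg) (C : Set S.A) : Prop :=
  ∀ {x y : S.A}, S.dep x y → (x ∈ C ↔ y ∈ C)

/-- Two-sided partial product `x·a·y`. -/
def mul3 (S : SyncAlg) (x a y : S.A) : Option S.A :=
  (S.mul x a).bind fun u => S.mul u y

/-- The syntactic congruence of a subset `C` of a synchronous algebra. -/
def synCong (S : SyncAlg) (C : Set S.A) (a b : S.A) : Prop :=
  (∀ x y u v, S.mul3 x a y = some u → S.mul3 x b y = some v → (u ∈ C ↔ v ∈ C)) ∧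
  (∀ x u v, S.mul x a = some u → S.mul x b = some v → (u ∈ C ↔ v ∈ C)) ∧
  (∀ y u v, S.mul a y = some u → S.mul b y = some v → (u ∈ C ↔ v ∈ C))

/-- Left residual `x⁻¹C` of a closed subset `C` by an element `x`. -/
def lres (S : SyncAlg) (x : S.A) (C : Set S.A) : Set S.A :=
  { y | ∃ y' u, S.synCong C y' y ∧ S.mul x y' = some u ∧ u ∈ C }

/-- Right residual `C·x⁻¹` of a closed subset `C` by an element `x`. -/
def rres (S : SyncAlg) (x : S.A) (C : Set S.A) : Set S.A :=
  { y | ∃ y' u, S.synCong C y' y ∧ S.mul y' x = some u ∧ u ∈ C }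

end SyncAlg

/-- Morphisms of synchronous algebras: preserve types, units, product and
dependency. -/
structure SyncHom (S T : SyncAlg) where
  toFun : S.A → T.A
  map_ty : ∀ x, T.ty (toFun x) = S.ty x
  map_unit : ∀ τ, toFun (S.unit τ) = T.unit τ
  map_mul : ∀ {x y z}, S.mul x y = some z →
    T.mul (toFun x) (toFun y) = some (toFun z)
  map_dep : ∀ {x y}, S.dep x y → T.dep (toFun x) (toFun y)

/-- The quotient of a synchronous algebra by a congruence
(a reflexive, symmetric relation that is coarser than the dependency relation,
locally transitive and compatible with the product) is again a synchronous
algebra, and the canonical map `x ↦ [x]` is a surjective morphism of synchronous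
algebras whose kernel on equal types is the congruence and whose induced
dependency relation is the congruence. -/
theorem quotient_syncAlg (S : SyncAlg) (r : S.A → S.A → Prop)
    (hrefl : ∀ x, r x x)
    (hsymm : ∀ {x y}, r x y → r y x)
    (hcoarse : ∀ {x y}, S.dep x y → r x y)
    (hloctrans : ∀ {x' x y y'}, S.ty x' = S.ty x → S.ty y = S.ty y' →
      r x' x → r x y → r y y' → r x' y')
    (hmul_left : ∀ {x x' y z z'}, r x x' →
      S.mul x y = some z → S.mul x' y = some z' → r z z')
    (hmul_right : ∀ {x x' y z z'}, r x x' →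
      S.mul y x = some z → S.mul y x' = some z' → r z z') :
    ∃ (Q : SyncAlg) (π : SyncHom S Q),
      Function.Surjective π.toFun ∧
      (∀ x y : S.A, π.toFun x = π.toFun y ↔ (r x y ∧ S.ty x = S.ty y)) ∧
      (∀ x y : S.A, Q.dep (π.toFun x) (π.toFun y) ↔ r x y) := by
  classical
  -- the equivalence relation: r together with equal types
  have etrans : ∀ {x y z : S.A}, (r x y ∧ S.ty x = S.ty y) →
      (r y z ∧ S.ty y = S.ty z) → (r x z ∧ S.ty x = S.ty z) := by
    rintro x y z ⟨h1, t1⟩ ⟨h2, t2⟩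
    exact ⟨hloctrans t1 t2 h1 (hrefl y) h2, t1.trans t2⟩
  let sd : Setoid S.A :=
    ⟨fun x y => r x y ∧ S.ty x = S.ty y,
     ⟨fun x => ⟨hrefl x, rfl⟩, fun h => ⟨hsymm h.1, h.2.symm⟩, etrans⟩⟩
  let mk : S.A → Quotient sd := Quotient.mk sd
  have hmk : ∀ x y, mk x = mk y ↔ (r x y ∧ S.ty x = S.ty y) := by
    intro x y
    constructor
    · intro h; exact Quotient.exact h
    · intro h; exact Quotient.sound h
  -- r is well-defined on the quotient
  have rwd : ∀ (a b a' b' : S.A), sd.r a a' → sd.r b b' → r a b = r a' b' := by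
    rintro a b a' b' ⟨ha, ta⟩ ⟨hb, tb⟩
    apply propext
    constructor
    · intro h; exact hloctrans ta.symm tb (hsymm ha) h hb
    · intro h; exact hloctrans ta tb.symm ha h (hsymm hb)
  -- the product is well-defined on the quotient
  have mulwd : ∀ (a b a' b' : S.A), sd.r a a' → sd.r b b' →
      (S.mul a b).map mk = (S.mul a' b').map mk := by
    rintro a b a' b' ⟨ha, ta⟩ ⟨hb, tb⟩
    rcases h1 : S.mul a b with _ | z
    · rcases h2 : S.mul a' b' with _ | z'
      · rfl
      · exfalso
        have hs : (S.mul a b).isSome := by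
          rw [S.mul_defined, ta, tb, ← S.mul_defined]
          rw [h2]; rfl
        rw [h1] at hs; simp at hs
    · rcases h2 : S.mul a' b' with _ | z'
      · exfalso
        have hs : (S.mul a' b').isSome := by
          rw [S.mul_defined, ← ta, ← tb, ← S.mul_defined]
          rw [h1]; rfl
        rw [h2] at hs; simp at hs
      · -- intermediate: mul a' b
        have hs : (S.mul a' b).isSome := by
          rw [S.mul_defined, ← ta, ← S.mul_defined, h1]; rfl
        rcases Option.isSome_iff_exists.mp hs with ⟨w, hw⟩
        have rzw : r z w := hmul_left ha h1 hw
        have rwz' : r w z' := hmul_right hb hw h2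
        have tz : S.ty z = S.ty w := by
          rw [S.ty_mul h1, S.ty_mul hw, ta]
        have tw : S.ty w = S.ty z' := by
          rw [S.ty_mul hw, S.ty_mul h2, tb]
        simp only [Option.map_some]
        congr 1
        exact (hmk z z').mpr (etrans ⟨rzw, tz⟩ ⟨rwz', tw⟩)
  let qmul : Quotient sd → Quotient sd → Option (Quotient sd) :=
    Quotient.lift₂ (fun a b => (S.mul a b).map mk) mulwd
  have qmul_mk : ∀ a b, qmul (mk a) (mk b) = (S.mul a b).map mk := fun _ _ => rfl
  let qty : Quotient sd → STy := Quotient.lift S.ty (fun _ _ h => h.2)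
  let qdep : Quotient sd → Quotient sd → Prop := Quotient.lift₂ r rwd
  -- helper to destructure quotient products
  have qmul_some : ∀ {a b : S.A} {z : Quotient sd}, qmul (mk a) (mk b) = some z →
      ∃ u, S.mul a b = some u ∧ mk u = z := by
    intro a b z h
    rw [qmul_mk] at h
    exact Option.map_eq_some_iff.mp h
  let Q : SyncAlg :=
    { A := Quotient sd
      ty := qty
      dep := qdep
      mul := qmul
      dep_refl := by
        intro x; induction x using Quotient.ind; exact hrefl _
      dep_symm := by
        intro x y
        induction x using Quotient.ind; induction y using Quotient.ind
        exact fun h => hsymm h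
      dep_eq := by
        intro x y
        induction x using Quotient.ind with | _ a =>
        induction y using Quotient.ind with | _ b =>
        intro h ht
        exact Quotient.sound ⟨h, ht⟩
      mul_defined := by
        intro x y
        induction x using Quotient.ind with | _ a =>
        induction y using Quotient.ind with | _ b =>
        rw [qmul_mk, Option.isSome_map]
        exact S.mul_defined a b
      ty_mul := by
        intro x y z
        induction x using Quotient.ind with | _ a =>
        induction y using Quotient.ind with | _ b =>
        intro h
        rcases qmul_some h with ⟨u, hu, huz⟩
        rw [← huz]
        exact S.ty_mul hu
      mul_assoc := by
        intro x y z
        induction x using Quotient.ind with | _ a =>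
        induction y using Quotient.ind with | _ b =>
        induction z using Quotient.ind with | _ c =>
        have L : (qmul (mk a) (mk b)).bind (fun u => qmul u (mk c))
            = ((S.mul a b).bind (fun u => S.mul u c)).map mk := by
          rw [qmul_mk]
          rcases S.mul a b with _ | u
          · rfl
          · simp only [Option.map_some, Option.bind_some]
            exact qmul_mk u c
        have R : (qmul (mk b) (mk c)).bind (fun u => qmul (mk a) u)
            = ((S.mul b c).bind (fun u => S.mul a u)).map mk := by
          rw [qmul_mk]
          rcases S.mul b c with _ | u
          · rfl
          · simp only [Option.map_some, Option.bind_some]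
            exact qmul_mk a u
        rw [L, R, S.mul_assoc]
      dep_mul_left := by
        intro x x' y z z'
        induction x using Quotient.ind with | _ a =>
        induction x' using Quotient.ind with | _ a' =>
        induction y using Quotient.ind with | _ b =>
        intro hd h1 h2
        rcases qmul_some h1 with ⟨u, hu, huz⟩
        rcases qmul_some h2 with ⟨u', hu', huz'⟩
        rw [← huz, ← huz']
        exact hmul_left hd hu hu'
      dep_mul_right := by
        intro x x' y z z'
        induction x using Quotient.ind with | _ a =>
        induction x' using Quotient.ind with | _ a' =>
        induction y using Quotient.ind with | _ b =>
        intro hd h1 h2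
        rcases qmul_some h1 with ⟨u, hu, huz⟩
        rcases qmul_some h2 with ⟨u', hu', huz'⟩
        rw [← huz, ← huz']
        exact hmul_right hd hu hu'
      unit := fun τ => mk (S.unit τ)
      ty_unit := fun τ => S.ty_unit τ
      unit_mul := by
        intro τ x z
        induction x using Quotient.ind with | _ a =>
        intro h
        rcases qmul_some h with ⟨u, hu, huz⟩
        rw [← huz]
        exact hcoarse (S.unit_mul hu)
      mul_unit := by
        intro τ x z
        induction x using Quotient.ind with | _ a =>
        intro h
        rcases qmul_some h with ⟨u, hu, huz⟩
        rw [← huz]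
        exact hcoarse (S.mul_unit hu)
      unit_lllb := by
        show qmul (mk _) (mk _) = _
        rw [qmul_mk, S.unit_lllb]; rfl
      unit_llbl := by
        show qmul (mk _) (mk _) = _
        rw [qmul_mk, S.unit_llbl]; rfl }
  refine ⟨Q, ⟨mk, fun x => rfl, fun τ => rfl, ?_, fun h => hcoarse h⟩, ?_, hmk, ?_⟩
  · intro x y z h
    show qmul (mk x) (mk y) = some (mk z)
    rw [qmul_mk, h]; rfl
  · intro q
    induction q using Quotient.ind with | _ a =>
    exact ⟨a, rfl⟩
  · intro x y; exact Iff.rfl
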